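/- Q ∈ K is invertible if and only if Q Q† = s + t ε satisfies s² − t² ≠ 0, i.e., (|q_r|² + |q_d|²)² ≠ (q_r q_d† + q_d q_r†)²; in that case Q⁻¹ = Q† (s − t ε)/(s² − t²). -/

import Mathlib

noncomputable section

/-- The algebra `K = ℍ ⊕ ℍε` of "dual" quaternions with `ε` central, `ε² = 1`,
modeled on pairs `(q_r, q_d)`. -/
def Kmul (x y : Quaternion ℝ × Quaternion ℝ) : Quaternion ℝ × Quaternion ℝ :=
  (x.1 * y.1 + x.2 * y.2, x.1 * y.2 + x.2 * y.1)

/-- Conjugation on `K`: quaternion conjugation on both components (`ε† = ε`). -/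
def Kconj (x : Quaternion ℝ × Quaternion ℝ) : Quaternion ℝ × Quaternion ℝ :=
  (star x.1, star x.2)

lemma Kassoc (x y z : Quaternion ℝ × Quaternion ℝ) :
    Kmul (Kmul x y) z = Kmul x (Kmul y z) := by
  simp only [Kmul, Prod.ext_iff]; constructor <;> noncomm_ring

lemma Kcentral (r u : ℝ) (x : Quaternion ℝ × Quaternion ℝ) :
    Kmul ((r : Quaternion ℝ), (u : Quaternion ℝ)) x
      = Kmul x ((r : Quaternion ℝ), (u : Quaternion ℝ)) := by
  simp only [Kmul, Prod.ext_iff, Quaternion.coe_commutes]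
  exact ⟨trivial, add_comm _ _⟩

lemma Kcentral' (r u : ℝ) (x : Quaternion ℝ × Quaternion ℝ) :
    Kmul ((r : Quaternion ℝ), -(u : Quaternion ℝ)) x
      = Kmul x ((r : Quaternion ℝ), -(u : Quaternion ℝ)) := by
  have := Kcentral r (-u) x
  simpa using this

lemma Kconj_mul (x y : Quaternion ℝ × Quaternion ℝ) :
    Kconj (Kmul x y) = Kmul (Kconj y) (Kconj x) := by
  simp only [Kmul, Kconj, Prod.ext_iff, star_add, star_mul]
  exact ⟨trivial, add_comm _ _⟩

lemma Kone_mul (x : Quaternion ℝ × Quaternion ℝ) : Kmul (1, 0) x = x := by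
  simp [Kmul]

lemma Ksmul_left (c : ℝ) (x y : Quaternion ℝ × Quaternion ℝ) :
    Kmul (c • x) y = c • Kmul x y := by
  simp [Kmul, Prod.smul_def, smul_add, smul_mul_assoc]

lemma Ksmul_right (c : ℝ) (x y : Quaternion ℝ × Quaternion ℝ) :
    Kmul x (c • y) = c • Kmul x y := by
  simp [Kmul, Prod.smul_def, smul_add, mul_smul_comm]

lemma hQQc (qr qd : Quaternion ℝ) :
    Kmul (qr, qd) (Kconj (qr, qd)) =
      (((Quaternion.normSq qr + Quaternion.normSq qd : ℝ) : Quaternion ℝ),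
       (((qr * star qd + qd * star qr).re : ℝ) : Quaternion ℝ)) := by
  simp only [Kmul, Kconj, Prod.ext_iff]
  constructor
  · simp [Quaternion.self_mul_star]
  · have h : qd * star qr = star (qr * star qd) := by simp [star_mul]
    rw [h, Quaternion.self_add_star']
    simp [Quaternion.re_mul]

lemma hQcQ (qr qd : Quaternion ℝ) :
    Kmul (Kconj (qr, qd)) (qr, qd) =
      (((Quaternion.normSq qr + Quaternion.normSq qd : ℝ) : Quaternion ℝ),
       (((qr * star qd + qd * star qr).re : ℝ) : Quaternion ℝ)) := by
  simp only [Kmul, Kconj, Prod.ext_iff]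
  constructor
  · simp [Quaternion.star_mul_self]
  · have h : star qr * qd = star (star qd * qr) := by simp [star_mul]
    rw [h, Quaternion.star_add_self']
    simp [Quaternion.re_mul, Quaternion.re_add]
    norm_cast; ring

lemma Kcomp (s t : ℝ) :
    Kmul ((s : Quaternion ℝ), (t : Quaternion ℝ)) ((s : Quaternion ℝ), -(t : Quaternion ℝ))
      = (((s ^ 2 - t ^ 2 : ℝ) : Quaternion ℝ), 0) := by
  simp only [Kmul, Prod.ext_iff, mul_neg, ← Quaternion.coe_mul]
  constructor
  · norm_cast; ring
  · rw [mul_comm t s]; exact neg_add_cancel _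

theorem K_invertible_iff (qr qd : Quaternion ℝ) :
    let Q : Quaternion ℝ × Quaternion ℝ := (qr, qd)
    let s : ℝ := Quaternion.normSq qr + Quaternion.normSq qd
    let t : ℝ := (qr * star qd + qd * star qr).re
    ((∃ R : Quaternion ℝ × Quaternion ℝ,
        Kmul Q R = (1, 0) ∧ Kmul R Q = (1, 0)) ↔ s ^ 2 - t ^ 2 ≠ 0) ∧
    (s ^ 2 - t ^ 2 ≠ 0 →
      Kmul Q ((s ^ 2 - t ^ 2)⁻¹ • Kmul (Kconj Q) (((s : Quaternion ℝ)), -(t : Quaternion ℝ)))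
        = (1, 0) ∧
      Kmul ((s ^ 2 - t ^ 2)⁻¹ • Kmul (Kconj Q) (((s : Quaternion ℝ)), -(t : Quaternion ℝ))) Q
        = (1, 0)) := by
  intro Q s t
  have hone : ((s ^ 2 - t ^ 2 : ℝ) ≠ 0) →
      (s ^ 2 - t ^ 2)⁻¹ • ((((s ^ 2 - t ^ 2 : ℝ)) : Quaternion ℝ), (0 : Quaternion ℝ))
        = ((1 : Quaternion ℝ), (0 : Quaternion ℝ)) := by
    intro h
    have : (s ^ 2 - t ^ 2)⁻¹ • (((s ^ 2 - t ^ 2 : ℝ)) : Quaternion ℝ) = 1 := by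
      rw [Algebra.smul_def, Quaternion.algebraMap_def, ← Quaternion.coe_mul,
        inv_mul_cancel₀ h, Quaternion.coe_one]
    rw [Prod.smul_def, this]
    simp
  have hmain : (s ^ 2 - t ^ 2 ≠ 0 →
      Kmul Q ((s ^ 2 - t ^ 2)⁻¹ • Kmul (Kconj Q) (((s : Quaternion ℝ)), -(t : Quaternion ℝ)))
        = (1, 0) ∧
      Kmul ((s ^ 2 - t ^ 2)⁻¹ • Kmul (Kconj Q) (((s : Quaternion ℝ)), -(t : Quaternion ℝ))) Q
        = (1, 0)) := by
    intro h
    constructor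
    · rw [Ksmul_right, ← Kassoc, hQQc qr qd, Kcomp, hone h]
    · rw [Ksmul_left, Kassoc, Kcentral', ← Kassoc, hQcQ qr qd, Kcomp, hone h]
  refine ⟨⟨fun ⟨R, h1, h2⟩ => ?_, fun h => ⟨_, hmain h⟩⟩, hmain⟩
  intro hc
  have key : Kmul ((s : Quaternion ℝ), (t : Quaternion ℝ)) (Kmul (Kconj R) R) = (1, 0) := by
    calc Kmul ((s : Quaternion ℝ), (t : Quaternion ℝ)) (Kmul (Kconj R) R)
        = Kmul (Kmul (Kconj R) R) ((s : Quaternion ℝ), (t : Quaternion ℝ)) :=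
          Kcentral s t _
      _ = Kmul (Kmul (Kconj R) R) (Kmul Q (Kconj Q)) := by rw [hQQc qr qd]
      _ = Kmul (Kconj R) (Kmul (Kmul R Q) (Kconj Q)) := by rw [Kassoc, Kassoc]
      _ = Kmul (Kconj R) (Kconj Q) := by rw [h2, Kone_mul]
      _ = Kconj (Kmul Q R) := (Kconj_mul Q R).symm
      _ = (1, 0) := by rw [h1]; simp [Kconj]
  set a := (Kmul (Kconj R) R).1 with ha
  set b := (Kmul (Kconj R) R).2 with hb
  have eq1 : (s : Quaternion ℝ) * a + (t : Quaternion ℝ) * b = 1 := by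
    have := congrArg Prod.fst key
    simpa [Kmul, ha, hb] using this
  have eq2 : (s : Quaternion ℝ) * b + (t : Quaternion ℝ) * a = 0 := by
    have := congrArg Prod.snd key
    simpa [Kmul, ha, hb] using this
  have e1 : s * a.re + t * b.re = 1 := by
    have := congrArg QuaternionAlgebra.re eq1
    simpa [Quaternion.re_mul, Quaternion.re_one] using this
  have e2 : s * b.re + t * a.re = 0 := by
    have := congrArg QuaternionAlgebra.re eq2
    simpa [Quaternion.re_mul, Quaternion.re_zero] using this
  have hs : s = 0 := by linear_combination a.re * hc - s * e1 + t * e2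
  have ht : t = 0 := by linear_combination s * e2 - t * e1 - b.re * hc
  rw [hs, ht] at e1
  simp at e1
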